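/- Let (L₁, L₂, P, (⊛ᵢ, ↙ⁱ, ↖ᵢ)_{i∈I}) be a multi-adjoint property-oriented frame, (X, Y, φ, τ) a context of this frame, and φ*, φ_* the associated operators. Then φ_* ∘ φ* is a closure operator on Y → L₂ (monotone, λ ≤ φ_*(φ* λ), idempotent), and the set Fix(φ_*∘φ*) = { λ : Y → L₂ ∣ φ_*(φ* λ) = λ }, ordered pointwise, is a complete lattice in which the infimum of a family (λⱼ)_{j∈J} is the pointwise infimum ⨅ⱼ λⱼ and the supremum is φ_*(φ*(⨆ⱼ λⱼ)). -/
import Mathlib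


/-- `φ_* ∘ φ*` is a closure operator on `Y → L₂`, and its fixed
points form a complete lattice with pointwise infima and with suprema given by
the closure of the pointwise supremum. -/
theorem stmt_11 {L₁ L₂ P : Type*} [CompleteLattice L₁] [CompleteLattice L₂]
    [CompleteLattice P] {I : Type*}
    (w : I → P → L₂ → L₁) (ld : I → L₁ → L₂ → P) (lu : I → L₁ → P → L₂)
    (adj : ∀ (i : I) (z : P) (y : L₂) (x : L₁),
      (w i z y ≤ x ↔ z ≤ ld i x y) ∧ (w i z y ≤ x ↔ y ≤ lu i x z))
    {X Y : Type*} (φ : X → Y → P) (τ : Y → I)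
    (star : (Y → L₂) → X → L₁) (lstar : (X → L₁) → Y → L₂)
    (hstar : ∀ (lam : Y → L₂) (x : X), star lam x = ⨆ y, w (τ y) (φ x y) (lam y))
    (hlstar : ∀ (μ : X → L₁) (y : Y), lstar μ y = ⨅ x, lu (τ y) (μ x) (φ x y))
    {J : Type*} (lam : J → Y → L₂) (hlam : ∀ j, lstar (star (lam j)) = lam j) :
    -- `φ_* ∘ φ*` is a closure operator
    (∀ lam₁ lam₂ : Y → L₂, lam₁ ≤ lam₂ → lstar (star lam₁) ≤ lstar (star lam₂)) ∧
    (∀ lam₀ : Y → L₂, lam₀ ≤ lstar (star lam₀)) ∧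
    (∀ lam₀ : Y → L₂, lstar (star (lstar (star lam₀))) = lstar (star lam₀)) ∧
    -- the pointwise infimum of fixed points is a fixed point ...
    lstar (star (⨅ j, lam j)) = ⨅ j, lam j ∧
    -- ... and is the greatest lower bound of the family among fixed points
    (∀ j, (⨅ j, lam j) ≤ lam j) ∧
    (∀ ν : Y → L₂, lstar (star ν) = ν → (∀ j, ν ≤ lam j) → ν ≤ ⨅ j, lam j) ∧
    -- the closure of the pointwise supremum is a fixed point ...
    lstar (star (lstar (star (⨆ j, lam j)))) = lstar (star (⨆ j, lam j)) ∧
    -- ... and is the least upper bound of the family among fixed points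
    (∀ j, lam j ≤ lstar (star (⨆ j, lam j))) ∧
    (∀ ν : Y → L₂, lstar (star ν) = ν → (∀ j, lam j ≤ ν) →
      lstar (star (⨆ j, lam j)) ≤ ν) := by
  -- Galois connection: star lam ≤ μ ↔ lam ≤ lstar μ
  have gc : ∀ (l : Y → L₂) (μ : X → L₁), star l ≤ μ ↔ l ≤ lstar μ := by
    intro l μ
    constructor
    · intro h y
      rw [hlstar]
      refine le_iInf fun x => ?_
      exact ((adj (τ y) (φ x y) (l y) (μ x)).2).1
        (le_trans (le_iSup (fun y => w (τ y) (φ x y) (l y)) y) ((hstar l x) ▸ h x))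
    · intro h x
      rw [hstar]
      refine iSup_le fun y => ?_
      exact ((adj (τ y) (φ x y) (l y) (μ x)).2).2
        (le_trans (h y) (by rw [hlstar]; exact iInf_le (fun x => lu (τ y) (μ x) (φ x y)) x))
  have ext : ∀ l : Y → L₂, l ≤ lstar (star l) := fun l => (gc l (star l)).1 le_rfl
  have defl : ∀ μ : X → L₁, star (lstar μ) ≤ μ := fun μ => (gc (lstar μ) μ).2 le_rfl
  have smono : ∀ l₁ l₂ : Y → L₂, l₁ ≤ l₂ → star l₁ ≤ star l₂ := fun l₁ l₂ h =>
    (gc l₁ (star l₂)).2 (le_trans h (ext l₂))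
  have lmono : ∀ μ₁ μ₂ : X → L₁, μ₁ ≤ μ₂ → lstar μ₁ ≤ lstar μ₂ := fun μ₁ μ₂ h =>
    (gc (lstar μ₁) μ₂).1 (le_trans (defl μ₁) h)
  have mono : ∀ l₁ l₂ : Y → L₂, l₁ ≤ l₂ → lstar (star l₁) ≤ lstar (star l₂) :=
    fun l₁ l₂ h => lmono _ _ (smono _ _ h)
  have idem : ∀ l : Y → L₂, lstar (star (lstar (star l))) = lstar (star l) := fun l =>
    le_antisymm (lmono _ _ (defl (star l))) (ext _)
  have hinf : lstar (star (⨅ j, lam j)) = ⨅ j, lam j := by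
    refine le_antisymm (le_iInf fun j => ?_) (ext _)
    exact le_trans (mono _ _ (iInf_le _ j)) (le_of_eq (hlam j))
  refine ⟨mono, ext, idem, hinf, fun j => iInf_le _ j,
    fun ν _ h => le_iInf h, idem _, fun j => le_trans (le_iSup lam j) (ext _),
    fun ν hν h => ?_⟩
  calc lstar (star (⨆ j, lam j)) ≤ lstar (star ν) := mono _ _ (iSup_le h)
    _ = ν := hν
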